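/- Fix a natural number k ≥ 2 and let α, α' be natural numbers with k/2 < α ≤ k and α < α' ≤ k. Then for every real p ∈ [0,1], |δ^{k,α}(p)| ≥ |δ^{k,α'}(p)|. -/
import Mathlib


/-- The expected relative progress of one Slush round with sample size `k`,
majority threshold `α`, at fraction `p` of parties holding opinion 1. -/
noncomputable def slushDelta (k α : ℕ) (p : ℝ) : ℝ :=
  ∑ ℓ ∈ Finset.Icc α k,
    (k.choose ℓ : ℝ) * (p ^ ℓ * (1 - p) ^ (k - ℓ + 1) - (1 - p) ^ ℓ * p ^ (k - ℓ + 1))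

lemma slush_term_nonneg (k ℓ : ℕ) (h : k < 2 * ℓ) (p : ℝ) (hp : 1/2 ≤ p) (hp1 : p ≤ 1) :
    0 ≤ p ^ ℓ * (1 - p) ^ (k - ℓ + 1) - (1 - p) ^ ℓ * p ^ (k - ℓ + 1) := by
  have hq0 : (0:ℝ) ≤ 1 - p := by linarith
  have hqp : 1 - p ≤ p := by linarith
  obtain ⟨m, hm⟩ : ∃ m, ℓ = (k - ℓ + 1) + m := ⟨ℓ - (k - ℓ + 1), by omega⟩
  set j := k - ℓ + 1
  rw [hm]
  have key : p ^ (j + m) * (1 - p) ^ j - (1 - p) ^ (j + m) * p ^ j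
      = (p * (1 - p)) ^ j * (p ^ m - (1 - p) ^ m) := by
    rw [pow_add, pow_add, mul_pow]; ring
  rw [key]
  exact mul_nonneg (pow_nonneg (mul_nonneg (by linarith) hq0) j)
    (sub_nonneg.2 (pow_le_pow_left₀ hq0 hqp m))

lemma slushDelta_nonneg (k α : ℕ) (hα : k < 2 * α) (p : ℝ) (hp : 1/2 ≤ p) (hp1 : p ≤ 1) :
    0 ≤ slushDelta k α p := by
  apply Finset.sum_nonneg
  intro ℓ hℓ
  rw [Finset.mem_Icc] at hℓ
  exact mul_nonneg (Nat.cast_nonneg _) (slush_term_nonneg k ℓ (by omega) p hp hp1)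

lemma slushDelta_mono (k α α' : ℕ) (hα : k < 2 * α) (hαα' : α ≤ α') (p : ℝ)
    (hp : 1/2 ≤ p) (hp1 : p ≤ 1) : slushDelta k α' p ≤ slushDelta k α p := by
  apply Finset.sum_le_sum_of_subset_of_nonneg
  · exact Finset.Icc_subset_Icc_left hαα'
  · intro ℓ hℓ _
    rw [Finset.mem_Icc] at hℓ
    exact mul_nonneg (Nat.cast_nonneg _) (slush_term_nonneg k ℓ (by omega) p hp hp1)

lemma slushDelta_antisymm (k α : ℕ) (p : ℝ) : slushDelta k α (1 - p) = - slushDelta k α p := by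
  unfold slushDelta
  rw [← Finset.sum_neg_distrib]
  refine Finset.sum_congr rfl fun ℓ _ => ?_
  have h : (1:ℝ) - (1 - p) = p := by ring
  rw [h]; ring

/-- for fixed `k`, with `k/2 < α ≤ k` and `α < α' ≤ k`,
`|δ^{k,α}(p)| ≥ |δ^{k,α'}(p)|` for all `p ∈ [0,1]`. -/
theorem slushDelta_domination (k α α' : ℕ) (hk : 2 ≤ k) (hα : k < 2 * α) (hαk : α ≤ k)
    (hαα' : α < α') (hα'k : α' ≤ k) (p : ℝ) (hp0 : 0 ≤ p) (hp1 : p ≤ 1) :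
    |slushDelta k α' p| ≤ |slushDelta k α p| := by
  rcases le_total (1/2 : ℝ) p with hp | hp
  · rw [abs_of_nonneg (slushDelta_nonneg k α' (by omega) p hp hp1),
      abs_of_nonneg (slushDelta_nonneg k α hα p hp hp1)]
    exact slushDelta_mono k α α' hα hαα'.le p hp hp1
  · have h1 : (1:ℝ)/2 ≤ 1 - p := by linarith
    have h2 : 1 - p ≤ 1 := by linarith
    have e1 := slushDelta_antisymm k α p
    have e2 := slushDelta_antisymm k α' p
    have : |slushDelta k α' (1 - p)| ≤ |slushDelta k α (1 - p)| := by
      rw [abs_of_nonneg (slushDelta_nonneg k α' (by omega) _ h1 h2),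
        abs_of_nonneg (slushDelta_nonneg k α hα _ h1 h2)]
      exact slushDelta_mono k α α' hα hαα'.le _ h1 h2
    rwa [e1, e2, abs_neg, abs_neg] at this
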